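/- The generating function identity Π_{k=0}^{∞} (1 + x^{2^k} + (2x)^{2^k}) = Σ_{n=0}^{∞} c(n) x^n holds for real x with 0 < x < 1/2. -/

import Mathlib

open Polynomial Finset

def c (n : Nat) : Nat := ∑ i ∈ Finset.range (n+1), (Nat.choose n i % 2) * 2^i

def F (k : Nat) : Nat := 2^(2^k) + 1

lemma choose_zmod (N n k : Nat) :
    (((n + 2^N).choose k : ZMod 2)) =
      (if 2^N ≤ k then ((n.choose (k - 2^N) : ZMod 2)) else 0) + (n.choose k : ZMod 2) := by
  have h1 : ((X + 1 : (ZMod 2)[X]) ^ (n + 2^N)).coeff k = ((n + 2^N).choose k : ZMod 2) := by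
    simpa using coeff_X_add_one_pow (ZMod 2) (n + 2^N) k
  have h2 : (X + 1 : (ZMod 2)[X]) ^ (2^N) = X ^ (2^N) + 1 := by
    simpa using add_pow_char_pow (x := (X : (ZMod 2)[X])) (y := 1) (p := 2) (n := N)
  rw [pow_add, h2, mul_add, mul_one, coeff_add, coeff_mul_X_pow'] at h1
  simp only [coeff_X_add_one_pow] at h1
  rw [← h1]

lemma mod2_of_zmod {a b : Nat} (h : (a : ZMod 2) = (b : ZMod 2)) : a % 2 = b % 2 :=
  (ZMod.natCast_eq_natCast_iff a b 2).mp h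

lemma choose_low (N n k : Nat) (hk : k < 2^N) :
    (n + 2^N).choose k % 2 = n.choose k % 2 := by
  apply mod2_of_zmod
  rw [choose_zmod N n k, if_neg (by omega), zero_add]

lemma choose_high (N n j : Nat) (hn : n < 2^N) :
    (n + 2^N).choose (2^N + j) % 2 = n.choose j % 2 := by
  apply mod2_of_zmod
  rw [choose_zmod N n (2^N + j), if_pos (by omega)]
  have h0 : n.choose (2^N + j) = 0 := Nat.choose_eq_zero_of_lt (by omega)
  simp [h0, Nat.add_sub_cancel_left]

lemma c_add_pow (N n : Nat) (hn : n < 2^N) :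
    c (n + 2^N) = (2^(2^N) + 1) * c n := by
  have hsplit : n + 2^N + 1 = 2^N + (n + 1) := by omega
  rw [c, hsplit, Finset.sum_range_add]
  have h1 : ∑ i ∈ Finset.range (2^N), ((n + 2^N).choose i % 2) * 2^i = c n := by
    rw [Finset.sum_congr rfl fun i hi => by
      rw [choose_low N n i (Finset.mem_range.mp hi)]]
    rw [c]
    exact (Finset.sum_subset (Finset.range_subset_range.mpr (by omega : n + 1 ≤ 2^N))
      (fun i _ hi => by
        have : n < i := by simpa using hi
        simp [Nat.choose_eq_zero_of_lt this])).symm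
  have h2 : ∑ i ∈ Finset.range (n + 1), ((n + 2^N).choose (2^N + i) % 2) * 2^(2^N + i)
      = 2^(2^N) * c n := by
    rw [c, Finset.mul_sum]
    exact Finset.sum_congr rfl fun i _ => by
      rw [choose_high N n i hn, pow_add]; ring
  rw [h1, h2]; ring

lemma partial_eq (x : ℝ) (N : Nat) :
    ∏ k ∈ Finset.range N, (1 + x^(2^k) + (2*x)^(2^k))
      = ∑ n ∈ Finset.range (2^N), (c n : ℝ) * x^n := by
  induction N with
  | zero => simp [c]
  | succ N ih =>
    rw [Finset.prod_range_succ, ih, pow_succ, mul_two, Finset.sum_range_add]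
    have : ∑ i ∈ Finset.range (2^N), (c (2^N + i) : ℝ) * x^(2^N + i)
        = (∑ n ∈ Finset.range (2^N), (c n : ℝ) * x^n) * ((2^(2^N) + 1) * x^(2^N)) := by
      rw [Finset.sum_mul]
      refine Finset.sum_congr rfl fun i hi => ?_
      rw [add_comm (2^N) i, c_add_pow N i (Finset.mem_range.mp hi)]
      push_cast
      rw [pow_add]
      ring
    rw [this, mul_pow]
    ring

lemma c_le (n : Nat) : (c n : ℝ) ≤ 2^(n+1) := by
  have : (c n : ℝ) = ∑ i ∈ Finset.range (n+1), ((Nat.choose n i % 2 : ℕ) : ℝ) * 2^i := by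
    rw [c]; push_cast; ring_nf
  rw [this]
  calc ∑ i ∈ Finset.range (n+1), ((Nat.choose n i % 2 : ℕ) : ℝ) * 2^i
      ≤ ∑ i ∈ Finset.range (n+1), (2:ℝ)^i := by
        refine Finset.sum_le_sum fun i _ => ?_
        have h : (Nat.choose n i % 2 : ℕ) ≤ 1 := Nat.lt_succ_iff.mp (Nat.mod_lt _ (by norm_num))
        have : ((Nat.choose n i % 2 : ℕ) : ℝ) ≤ 1 := by exact_mod_cast h
        nlinarith [pow_pos (by norm_num : (0:ℝ) < 2) i]
    _ = 2^(n+1) - 1 := by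
        rw [geom_sum_eq (by norm_num)]; ring
    _ ≤ 2^(n+1) := by linarith

theorem stmt19 (x : ℝ) (hx : 0 < x) (hx' : x < 1/2) :
    Filter.Tendsto (fun N : Nat => ∏ k ∈ Finset.range N, (1 + x^(2^k) + (2*x)^(2^k)))
      Filter.atTop (nhds (∑' n : Nat, (c n : ℝ) * x^n)) := by
  have hgeo : Summable (fun n : Nat => 2 * (2*x)^n) :=
    (summable_geometric_of_lt_one (by positivity) (by linarith)).mul_left 2
  have hle : ∀ n : Nat, (c n : ℝ) * x^n ≤ 2 * (2*x)^n := by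
    intro n
    calc (c n : ℝ) * x^n ≤ 2^(n+1) * x^n :=
        mul_le_mul_of_nonneg_right (c_le n) (by positivity)
      _ = 2 * (2*x)^n := by rw [mul_pow, pow_succ]; ring
  have hsum : Summable (fun n : Nat => (c n : ℝ) * x^n) :=
    Summable.of_nonneg_of_le (fun n => by positivity) hle hgeo
  have htends := hsum.hasSum.tendsto_sum_nat
  have hpow : Filter.Tendsto (fun N : Nat => 2^N) Filter.atTop Filter.atTop :=
    tendsto_pow_atTop_atTop_of_one_lt (by norm_num)
  have heq : (fun N : Nat => ∏ k ∈ Finset.range N, (1 + x^(2^k) + (2*x)^(2^k)))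
      = fun N : Nat => ∑ n ∈ Finset.range (2^N), (c n : ℝ) * x^n :=
    funext (partial_eq x)
  rw [heq]
  exact htends.comp hpow
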